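/- Define a linear operator D on the algebra of symmetric functions by D S_ν = -|ν| S_ν + ∑_{□∈ν⁻} (z+c(□))(z'+c(□)) S_{ν∖□}, where ν⁻ is the set of corner boxes of ν. Then each Laguerre symmetric function L_ν = ∑_{μ⊆ν} C(ν,μ;z,z') S_μ satisfies D L_ν = -|ν| L_ν. -/

import Mathlib

open scoped BigOperators

/-- `∏_{□∈s} (z + c(□))(z' + c(□))` where `c((i,j)) = j - i`. -/
noncomputable def contentProd {R : Type*} [CommRing R] (z z' : R) (s : Finset (ℕ × ℕ)) : R :=
  ∏ b ∈ s, ((z + (((b.2 : ℤ) - (b.1 : ℤ) : ℤ) : R)) * (z' + (((b.2 : ℤ) - (b.1 : ℤ) : ℤ) : R)))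

/-- Number of standard Young tableaux of skew shape `ν/μ`, i.e. of saturated chains
from `μ` to `ν` in the Young lattice. -/
noncomputable def dimSkew (μ ν : YoungDiagram) : ℕ :=
  Nat.card {c : ℕ → YoungDiagram //
    c 0 = μ ∧
    (∀ i, i < ν.card - μ.card → c i ≤ c (i + 1) ∧ (c (i + 1)).card = (c i).card + 1) ∧
    ∀ i, ν.card - μ.card ≤ i → c i = ν}

/-- Elementary symmetric function `e_k` as a generator of `Λ = ℂ[e₁,e₂,…]`,
with `e_0 = 1` and `e_k = 0` for `k < 0`. -/
noncomputable def eGen (k : ℤ) : MvPolynomial ℕ ℂ :=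
  if k < 0 then 0 else if k = 0 then 1 else MvPolynomial.X (k.toNat - 1)

/-- Schur function via the Nägelsbach–Kostka formula `S_ν = det[e_{ν'_i - i + j}]`. -/
noncomputable def SchurF (ν : YoungDiagram) : MvPolynomial ℕ ℂ :=
  Matrix.det (Matrix.of fun i j : Fin (ν.rowLen 0) =>
    eGen ((ν.colLen i : ℤ) - (i : ℤ) + (j : ℤ)))

/-- Coefficient of the Laguerre symmetric functions in the Schur basis. -/
noncomputable def LagC (z z' : ℂ) (ν μ : YoungDiagram) : ℂ :=
  (-1) ^ (ν.card - μ.card) * (dimSkew μ ν : ℂ) / (Nat.factorial (ν.card - μ.card) : ℂ)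
    * contentProd z z' (ν.cells \ μ.cells)

/-- The Laguerre symmetric function `𝕃_ν`. -/
noncomputable def LaguerreSF (z z' : ℂ) (ν : YoungDiagram) : MvPolynomial ℕ ℂ :=
  ∑ᶠ (μ : YoungDiagram) (_ : μ ≤ ν), LagC z z' ν μ • SchurF μ


/-! ### Auxiliary machinery -/

/-- The chain property underlying `dimSkew`. -/
def ChainP (μ ν : YoungDiagram) (c : ℕ → YoungDiagram) : Prop :=
  c 0 = μ ∧
    (∀ i, i < ν.card - μ.card → c i ≤ c (i + 1) ∧ (c (i + 1)).card = (c i).card + 1) ∧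
    ∀ i, ν.card - μ.card ≤ i → c i = ν

lemma dimSkew_eq (μ ν : YoungDiagram) : dimSkew μ ν = Nat.card {c // ChainP μ ν c} := rfl

lemma ChainP.le_nu {μ ν : YoungDiagram} {c : ℕ → YoungDiagram} (h : ChainP μ ν c) (i : ℕ) :
    c i ≤ ν := by
  have mono : Monotone c := by
    apply monotone_nat_of_le_succ
    intro j
    rcases lt_or_ge j (ν.card - μ.card) with hj | hj
    · exact (h.2.1 j hj).1
    · rw [h.2.2 j hj, h.2.2 (j + 1) (by omega)]
  calc c i ≤ c (max i (ν.card - μ.card)) := mono (le_max_left _ _)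
    _ = ν := h.2.2 _ (le_max_right _ _)

lemma ydCardMono {μ ν : YoungDiagram} (h : μ ≤ ν) : μ.card ≤ ν.card :=
  Finset.card_le_card (YoungDiagram.cells_subset_iff.2 h)

lemma finite_le (ν : YoungDiagram) : {μ : YoungDiagram | μ ≤ ν}.Finite := by
  have hs : {μ : YoungDiagram | μ ≤ ν} = YoungDiagram.cells ⁻¹' ↑ν.cells.powerset := by
    ext μ
    simp [Finset.mem_powerset, YoungDiagram.cells_subset_iff]
  rw [hs]
  exact Set.Finite.preimage (fun a _ b _ h => YoungDiagram.ext h) (ν.cells.powerset.finite_toSet)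

lemma finite_le_subtype (ν : YoungDiagram) : Finite {x : YoungDiagram // x ≤ ν} :=
  (finite_le ν).to_subtype

lemma finite_chain (μ ν : YoungDiagram) : Finite {c : ℕ → YoungDiagram // ChainP μ ν c} := by
  haveI := finite_le_subtype ν
  set n := ν.card - μ.card with hn
  apply Finite.of_injective
    (fun c : {c // ChainP μ ν c} =>
      (fun i : Fin (n + 1) => (⟨c.1 i, c.2.le_nu i⟩ : {x : YoungDiagram // x ≤ ν})))
  intro c d h
  apply Subtype.ext; funext i
  rcases le_or_gt i n with hi | hi
  · have := congrFun h ⟨i, by omega⟩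
    simpa [Subtype.ext_iff] using this
  · rw [c.2.2.2 i (by omega), d.2.2.2 i (by omega)]

lemma dimSkew_rec (l ν : YoungDiagram) (hlt : l.card < ν.card) (T : Finset YoungDiagram)
    (hT : ∀ μ, μ ∈ T ↔ (l ≤ μ ∧ l.card + 1 = μ.card ∧ μ ≤ ν)) :
    dimSkew l ν = ∑ μ ∈ T, dimSkew μ ν := by
  classical
  have e : {c // ChainP l ν c} ≃ Σ (μ : {x // x ∈ T}), {c // ChainP μ.1 ν c} := by
    refine
      { toFun := fun c =>
          ⟨⟨c.1 1, ?_⟩, ⟨fun i => c.1 (i + 1), ?_, ?_, ?_⟩⟩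
        invFun := fun x =>
          ⟨fun i => if i = 0 then l else x.2.1 (i - 1), ?_, ?_, ?_⟩
        left_inv := ?_
        right_inv := ?_ }
    · -- c 1 ∈ T
      have h0 := c.2.2.1 0 (by omega)
      rw [hT]
      refine ⟨?_, by rw [h0.2, c.2.1], c.2.le_nu 1⟩
      have h1 := h0.1
      rw [c.2.1] at h1
      simpa using h1
    · rfl
    · -- steps of shifted chain
      intro i hi
      have hc1 : (c.1 1).card = l.card + 1 := by
        have h0 := c.2.2.1 0 (by omega); rw [h0.2, c.2.1]
      have hc1ν : (c.1 1).card ≤ ν.card := ydCardMono (c.2.le_nu 1)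
      have hi' : i < ν.card - (c.1 1).card := hi
      exact c.2.2.1 (i + 1) (by omega)
    · intro i hi
      have hc1 : (c.1 1).card = l.card + 1 := by
        have h0 := c.2.2.1 0 (by omega); rw [h0.2, c.2.1]
      have hc1ν : (c.1 1).card ≤ ν.card := ydCardMono (c.2.le_nu 1)
      have hi' : ν.card - (c.1 1).card ≤ i := hi
      exact c.2.2.2 (i + 1) (by omega)
    · simp
    · -- steps of extended chain
      rcases x with ⟨⟨μ, hμ⟩, d⟩
      obtain ⟨hle, hcard, hμν⟩ := (hT μ).1 hμ
      have hm : μ.card ≤ ν.card := ydCardMono hμν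
      intro i hi
      rcases Nat.eq_zero_or_pos i with rfl | hpos
      · simpa [d.2.1] using And.intro hle hcard.symm
      · have hstep := d.2.2.1 (i - 1) (show i - 1 < ν.card - μ.card by omega)
        have h1 : i - 1 + 1 = i := by omega
        rw [h1] at hstep
        simpa [Nat.pos_iff_ne_zero.1 hpos] using hstep
    · rcases x with ⟨⟨μ, hμ⟩, d⟩
      obtain ⟨hle, hcard, hμν⟩ := (hT μ).1 hμ
      intro i hi
      have hi0 : i ≠ 0 := by omega
      simp only [hi0, if_false]
      exact d.2.2.2 (i - 1) (show ν.card - μ.card ≤ i - 1 by omega)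
    · intro c
      apply Subtype.ext; funext i
      rcases Nat.eq_zero_or_pos i with rfl | hpos
      · simpa using c.2.1.symm
      · have h1 : i - 1 + 1 = i := by omega
        simp only [Nat.pos_iff_ne_zero.1 hpos, if_false]
        exact congrArg c.1 h1
    · rintro ⟨⟨μ, hμ⟩, d⟩
      apply Sigma.subtype_ext
      · apply Subtype.ext
        simpa using d.2.1
      · funext i
        simp
  haveI : ∀ μ : {x // x ∈ T}, Finite {c // ChainP μ.1 ν c} := fun μ => finite_chain _ _
  letI : ∀ μ : {x // x ∈ T}, Fintype {c // ChainP μ.1 ν c} := fun μ => Fintype.ofFinite _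
  rw [dimSkew_eq, Nat.card_congr e, Nat.card_eq_fintype_card, Fintype.card_sigma,
    ← Finset.sum_coe_sort T (fun μ => dimSkew μ ν)]
  exact Finset.sum_congr rfl fun μ _ => by
    rw [dimSkew_eq, Nat.card_eq_fintype_card]

lemma contentProd_mul (z z' : ℂ) {l μ ν : YoungDiagram} (h1 : l ≤ μ) (h2 : μ ≤ ν) :
    contentProd z z' (ν.cells \ μ.cells) * contentProd z z' (μ.cells \ l.cells)
      = contentProd z z' (ν.cells \ l.cells) := by
  unfold contentProd
  rw [← Finset.prod_union
    (Finset.sdiff_disjoint.mono_right Finset.sdiff_subset),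
    Finset.sdiff_union_sdiff_cancel (YoungDiagram.cells_subset_iff.2 h2)
      (YoungDiagram.cells_subset_iff.2 h1)]

lemma yd_eq_of_le_card {l ν : YoungDiagram} (h : l ≤ ν) (hc : ν.card ≤ l.card) : l = ν :=
  YoungDiagram.ext (Finset.eq_of_subset_of_card_le (YoungDiagram.cells_subset_iff.2 h) hc)

lemma key_algebra (k : ℕ) (hk : 1 ≤ k) (lc nc d p : ℂ) (hnc : nc = lc + k) :
    -(lc) * ((-1) ^ k * d / (Nat.factorial k : ℂ) * p)
      + d * ((-1) ^ (k - 1) / (Nat.factorial (k - 1) : ℂ) * p)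
      = -(nc) * ((-1) ^ k * d / (Nat.factorial k : ℂ) * p) := by
  obtain ⟨m, rfl⟩ : ∃ m, k = m + 1 := ⟨k - 1, by omega⟩
  subst hnc
  simp only [Nat.add_sub_cancel, Nat.factorial_succ, pow_succ]
  have h1 : ((Nat.factorial m : ℂ)) ≠ 0 := Nat.cast_ne_zero.2 (Nat.factorial_ne_zero m)
  have h2 : ((m : ℂ) + 1) ≠ 0 := by
    have := Nat.cast_add_one_ne_zero (R := ℂ) m
    simpa using this
  push_cast
  field_simp

open Finset in
lemma key_identity (z z' : ℂ) (ν : YoungDiagram) (F : Finset YoungDiagram)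
    (hmemF : ∀ μ, μ ∈ F ↔ μ ≤ ν) (l : YoungDiagram) (hl : l ≤ ν)
    [DecidablePred (fun μ : YoungDiagram => l ≤ μ ∧ l.card + 1 = μ.card)] :
    -(l.card : ℂ) * LagC z z' ν l +
      ∑ μ ∈ F.filter (fun μ => l ≤ μ ∧ l.card + 1 = μ.card),
        LagC z z' ν μ * contentProd z z' (μ.cells \ l.cells)
      = -(ν.card : ℂ) * LagC z z' ν l := by
  have hcle : l.card ≤ ν.card := ydCardMono hl
  set T := F.filter (fun μ => l ≤ μ ∧ l.card + 1 = μ.card) with hTdef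
  have hTmem : ∀ μ, μ ∈ T ↔ (l ≤ μ ∧ l.card + 1 = μ.card ∧ μ ≤ ν) := by
    intro μ
    simp only [hTdef, Finset.mem_filter, hmemF]
    tauto
  by_cases hc : l.card = ν.card
  · have hT0 : T = ∅ := by
      apply Finset.eq_empty_of_forall_notMem
      intro μ hμ
      obtain ⟨_, h2, h3⟩ := (hTmem μ).1 hμ
      have := ydCardMono h3
      omega
    rw [hT0, Finset.sum_empty, add_zero, hc]
  · have hlt : l.card < ν.card := lt_of_le_of_ne hcle hc
    have hrec := dimSkew_rec l ν hlt T hTmem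
    have hterm : ∀ μ ∈ T, LagC z z' ν μ * contentProd z z' (μ.cells \ l.cells)
        = (dimSkew μ ν : ℂ) *
            ((-1) ^ (ν.card - l.card - 1) / (Nat.factorial (ν.card - l.card - 1) : ℂ)
              * contentProd z z' (ν.cells \ l.cells)) := by
      intro μ hμ
      obtain ⟨h1, h2, h3⟩ := (hTmem μ).1 hμ
      have hμc : μ.card ≤ ν.card := ydCardMono h3
      have e1 : ν.card - μ.card = ν.card - l.card - 1 := by omega
      rw [LagC, e1, mul_assoc, contentProd_mul z z' h1 h3]
      ring
    rw [Finset.sum_congr rfl hterm, ← Finset.sum_mul, ← Nat.cast_sum, ← hrec]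
    rw [LagC]
    have hk : 1 ≤ ν.card - l.card := by omega
    have hnc : (ν.card : ℂ) = (l.card : ℂ) + ((ν.card - l.card : ℕ) : ℂ) := by
      push_cast [Nat.cast_sub hcle]
      ring
    have := key_algebra (ν.card - l.card) hk (l.card : ℂ) (ν.card : ℂ)
      (dimSkew l ν : ℂ) (contentProd z z' (ν.cells \ l.cells)) hnc
    calc -(l.card : ℂ) * ((-1) ^ (ν.card - l.card) * (dimSkew l ν : ℂ)
            / (Nat.factorial (ν.card - l.card) : ℂ) * contentProd z z' (ν.cells \ l.cells))
          + (dimSkew l ν : ℂ) * ((-1) ^ (ν.card - l.card - 1)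
            / (Nat.factorial (ν.card - l.card - 1) : ℂ)
            * contentProd z z' (ν.cells \ l.cells))
        = -(ν.card : ℂ) * ((-1) ^ (ν.card - l.card) * (dimSkew l ν : ℂ)
            / (Nat.factorial (ν.card - l.card) : ℂ)
            * contentProd z z' (ν.cells \ l.cells)) := this
      _ = _ := by ring

/-- If `D` is the linear operator on `Λ` acting on the Schur basis by
`D S_ν = -|ν| S_ν + ∑_{□∈ν⁻} (z+c(□))(z'+c(□)) S_{ν∖□}` (the sum being over the
diagrams `μ ⊆ ν` obtained by removing one corner box), then the Laguerre symmetric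
functions are eigenvectors: `D 𝕃_ν = -|ν| 𝕃_ν`. -/
theorem laguerreSF_eigen (z z' : ℂ)
    (D : MvPolynomial ℕ ℂ →ₗ[ℂ] MvPolynomial ℕ ℂ)
    (hD : ∀ ν : YoungDiagram, D (SchurF ν) =
      -(ν.card : ℂ) • SchurF ν +
        ∑ᶠ (μ : YoungDiagram) (_ : μ ≤ ν ∧ μ.card + 1 = ν.card),
          contentProd z z' (ν.cells \ μ.cells) • SchurF μ)
    (ν : YoungDiagram) :
    D (LaguerreSF z z' ν) = -(ν.card : ℂ) • LaguerreSF z z' ν := by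
  classical
  have hFfin := finite_le ν
  set F : Finset YoungDiagram := hFfin.toFinset with hF
  have hmemF : ∀ μ, μ ∈ F ↔ μ ≤ ν := fun μ => Set.Finite.mem_toFinset _
  have hL : LaguerreSF z z' ν = ∑ μ ∈ F, LagC z z' ν μ • SchurF μ := by
    rw [LaguerreSF]
    exact finsum_mem_eq_finite_toFinset_sum _ hFfin
  have hfinS : ∀ μ : YoungDiagram, {x : YoungDiagram | x ≤ μ ∧ x.card + 1 = μ.card}.Finite :=
    fun μ => (finite_le μ).subset (fun x hx => hx.1)
  have hinner : ∀ μ ∈ F, D (SchurF μ) = -(μ.card : ℂ) • SchurF μ +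
      ∑ x ∈ F.filter (fun x => x ≤ μ ∧ x.card + 1 = μ.card),
        contentProd z z' (μ.cells \ x.cells) • SchurF x := by
    intro μ hμ
    rw [hD μ]
    congr 1
    refine Eq.trans (finsum_mem_eq_finite_toFinset_sum
      (fun x => contentProd z z' (μ.cells \ x.cells) • SchurF x) (hfinS μ)) ?_
    apply Finset.sum_congr _ (fun _ _ => rfl)
    ext x
    simp only [Set.Finite.mem_toFinset, Set.mem_setOf_eq, Finset.mem_filter, hmemF]
    constructor
    · rintro ⟨h1, h2⟩
      exact ⟨h1.trans ((hmemF μ).1 hμ), h1, h2⟩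
    · tauto
  have hsecond : ∀ x ∈ F, (∑ μ ∈ F, if x ≤ μ ∧ x.card + 1 = μ.card then
        (LagC z z' ν μ * contentProd z z' (μ.cells \ x.cells)) • SchurF x else 0)
      = (∑ μ ∈ F.filter (fun μ => x ≤ μ ∧ x.card + 1 = μ.card),
          LagC z z' ν μ * contentProd z z' (μ.cells \ x.cells)) • SchurF x := by
    intro x hx
    rw [Finset.sum_smul, Finset.sum_filter]
  rw [hL, map_sum]
  calc ∑ μ ∈ F, D (LagC z z' ν μ • SchurF μ)
      = ∑ μ ∈ F, ((LagC z z' ν μ * -(μ.card : ℂ)) • SchurF μ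
          + ∑ x ∈ F, if x ≤ μ ∧ x.card + 1 = μ.card then
              (LagC z z' ν μ * contentProd z z' (μ.cells \ x.cells)) • SchurF x else 0) := by
        refine Finset.sum_congr rfl fun μ hμ => ?_
        rw [map_smul, hinner μ hμ, smul_add, smul_smul, Finset.smul_sum, Finset.sum_filter]
        congr 1
        refine Finset.sum_congr rfl fun x _ => ?_
        split <;> simp [smul_smul]
    _ = ∑ μ ∈ F, (LagC z z' ν μ * -(μ.card : ℂ)) • SchurF μ
          + ∑ x ∈ F, ∑ μ ∈ F, (if x ≤ μ ∧ x.card + 1 = μ.card then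
              (LagC z z' ν μ * contentProd z z' (μ.cells \ x.cells)) • SchurF x else 0) := by
        rw [Finset.sum_add_distrib, Finset.sum_comm]
    _ = ∑ x ∈ F, (-(ν.card : ℂ) * LagC z z' ν x) • SchurF x := by
        rw [← Finset.sum_add_distrib]
        refine Finset.sum_congr rfl fun x hx => ?_
        rw [hsecond x hx, ← add_smul]
        congr 1
        have hk := key_identity z z' ν F hmemF x ((hmemF x).1 hx)
        rw [mul_comm]
        exact hk
    _ = -(ν.card : ℂ) • ∑ μ ∈ F, LagC z z' ν μ • SchurF μ := by
        rw [Finset.smul_sum]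
        exact Finset.sum_congr rfl fun x _ => (smul_smul _ _ _).symm
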